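/- (Theorem 1, case 4, exact form.) Suppose l < i < u, l < j < u, u ≤ i + B, l ≥ i − D (both bounds reachable), and K ≤ 2(u − l). Then, as an identity of integers, the cardinality of 𝕊_{ij}^B(l,u) equals C(K, B) − C(K, B_l) − C(K, B_u) + c_{lu} + c_{ul}, where B_l = B + l − j, B_u = B − j + u, c_{lu} = C(K, B − (u − l)) if B ≥ u − l and c_{lu} = 0 otherwise, and c_{ul} = C(K, B + (u − l)). -/

import Mathlib

/-- An integer grid bridge from `i` to `j` with `B` upward jumps and `D` downward
jumps. -/
def IsBridge (i j : ℤ) (B D : ℕ) (ω : Fin (B + D + 1) → ℤ) : Prop :=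
  ω 0 = i ∧ ω (Fin.last (B + D)) = j ∧
    (∀ k : Fin (B + D), |ω k.succ - ω k.castSucc| = 1) ∧
    (Finset.univ.filter (fun k : Fin (B + D) => ω k.succ = ω k.castSucc + 1)).card = B

/-- `𝕊_{ij}^B(l,u)`: bridges staying strictly between `l` and `u`. -/
def BoundedBridges (i j l u : ℤ) (B D : ℕ) : Set (Fin (B + D + 1) → ℤ) :=
  {ω | IsBridge i j B D ω ∧ ∀ k : Fin (B + D + 1), l < ω k ∧ ω k < u}

open scoped symmDiff Classical

namespace BridgeAux
variable {K : ℕ} (i : ℤ)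

/-- number of up-steps among the first `m` steps -/
def cnt (S : Finset (Fin K)) (m : ℕ) : ℕ := (S.filter (fun k : Fin K => (k : ℕ) < m)).card

/-- the path determined by up-step set `S`, starting at `i` -/
def pth (S : Finset (Fin K)) (m : ℕ) : ℤ := i + 2 * (cnt S m : ℤ) - m

def Iset (τ : ℕ) : Finset (Fin K) := Finset.univ.filter (fun k => τ ≤ (k : ℕ))

lemma mem_Iset {τ : ℕ} {k : Fin K} : k ∈ (Iset τ : Finset (Fin K)) ↔ τ ≤ (k : ℕ) := by
  simp [Iset]

@[simp] lemma pth_zero (S : Finset (Fin K)) : pth i S 0 = i := by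
  simp [pth, cnt]

lemma cnt_succ (S : Finset (Fin K)) {m : ℕ} (hm : m < K) :
    cnt S (m + 1) = cnt S m + (if (⟨m, hm⟩ : Fin K) ∈ S then 1 else 0) := by
  classical
  unfold cnt
  have h1 : (S.filter (fun k : Fin K => (k : ℕ) < m + 1))
      = (S.filter (fun k : Fin K => (k : ℕ) < m)) ∪ (S.filter (fun k : Fin K => (k : ℕ) = m)) := by
    rw [← Finset.filter_or]
    apply Finset.filter_congr
    intro k _
    simp [Nat.lt_succ_iff_lt_or_eq, Nat.le_iff_lt_or_eq]
  rw [h1, Finset.card_union_of_disjoint]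
  · congr 1
    by_cases h : (⟨m, hm⟩ : Fin K) ∈ S
    · have : (S.filter (fun k : Fin K => (k : ℕ) = m)) = {(⟨m, hm⟩ : Fin K)} := by
        ext k
        simp only [Finset.mem_filter, Finset.mem_singleton]
        constructor
        · rintro ⟨_, hk⟩; exact Fin.ext hk
        · rintro rfl; exact ⟨h, rfl⟩
      simp [this, h]
    · have : (S.filter (fun k : Fin K => (k : ℕ) = m)) = ∅ := by
        ext k
        simp only [Finset.mem_filter, Finset.notMem_empty, iff_false, not_and]
        intro hk hkm
        exact h (by rwa [show (⟨m, hm⟩ : Fin K) = k from (Fin.ext hkm.symm)])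
      rw [this]; simp [h]
  · rw [Finset.disjoint_left]
    intro k hk hk2
    simp only [Finset.mem_filter] at hk hk2
    omega

lemma pth_succ (S : Finset (Fin K)) {m : ℕ} (hm : m < K) :
    pth i S (m + 1) = pth i S m + (if (⟨m, hm⟩ : Fin K) ∈ S then 1 else -1) := by
  unfold pth
  rw [cnt_succ S hm]
  by_cases h : (⟨m, hm⟩ : Fin K) ∈ S <;> simp [h] <;> ring

lemma cnt_K (S : Finset (Fin K)) : cnt S K = S.card := by
  unfold cnt
  congr 1
  apply Finset.filter_true_of_mem
  intro k _; exact k.isLt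

lemma pth_K (S : Finset (Fin K)) : pth i S K = i + 2 * (S.card : ℤ) - K := by
  rw [pth, cnt_K]

lemma pth_step_abs (S : Finset (Fin K)) {m : ℕ} (hm : m < K) :
    |pth i S (m + 1) - pth i S m| = 1 := by
  rw [pth_succ i S hm]
  by_cases h : (⟨m, hm⟩ : Fin K) ∈ S <;> simp [h]

lemma pth_dist (S : Finset (Fin K)) {m₁ m₂ : ℕ} (h12 : m₁ ≤ m₂) (h2K : m₂ ≤ K) :
    |pth i S m₂ - pth i S m₁| ≤ (m₂ : ℤ) - m₁ := by
  induction m₂, h12 using Nat.le_induction with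
  | base => simp
  | succ m hm ih =>
    have hmK : m < K := by omega
    have h1 := pth_step_abs i S hmK
    have h2 := ih (by omega)
    have := abs_sub_abs_le_abs_sub (pth i S (m+1) - pth i S m₁) (pth i S (m+1) - pth i S m)
    push_cast
    calc |pth i S (m+1) - pth i S m₁|
        ≤ |pth i S m - pth i S m₁| + |pth i S (m+1) - pth i S m| := by
          have := abs_add_le (pth i S m - pth i S m₁) (pth i S (m+1) - pth i S m)
          simpa [sub_add_sub_cancel'] using this
      _ ≤ ((m : ℤ) - m₁) + 1 := by linarith
      _ = (m : ℤ) + 1 - m₁ := by ring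


variable {K : ℕ} (i : ℤ)

lemma filter_symmDiff_Iset {τ m : ℕ} (S : Finset (Fin K)) (h : m ≤ τ) :
    ((S ∆ Iset τ).filter (fun k : Fin K => (k : ℕ) < m))
      = S.filter (fun k : Fin K => (k : ℕ) < m) := by
  ext k
  simp only [Finset.mem_filter, Finset.mem_symmDiff, mem_Iset]
  constructor
  · rintro ⟨h1, h2⟩
    refine ⟨?_, h2⟩
    rcases h1 with ⟨hS, _⟩ | ⟨hI, _⟩
    · exact hS
    · omega
  · rintro ⟨h1, h2⟩
    exact ⟨Or.inl ⟨h1, by omega⟩, h2⟩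

lemma pth_refl_le {τ m : ℕ} (S : Finset (Fin K)) (h : m ≤ τ) :
    pth i (S ∆ Iset τ) m = pth i S m := by
  unfold pth cnt
  rw [filter_symmDiff_Iset S h]

lemma mem_symmDiff_Iset {τ : ℕ} {S : Finset (Fin K)} {k : Fin K} (h : τ ≤ (k : ℕ)) :
    k ∈ S ∆ Iset τ ↔ k ∉ S := by
  rw [Finset.mem_symmDiff]
  simp [mem_Iset, h]

lemma pth_refl_ge {τ m : ℕ} (S : Finset (Fin K)) (h : τ ≤ m) (hK : m ≤ K) :
    pth i (S ∆ Iset τ) m = 2 * pth i S τ - pth i S m := by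
  induction m, h using Nat.le_induction with
  | base => rw [pth_refl_le i S (le_refl τ)]; ring
  | succ m hm ih =>
    have hmK : m < K := by omega
    rw [pth_succ i _ hmK, pth_succ i S hmK, ih (by omega)]
    have hmem := mem_symmDiff_Iset (S := S) (k := (⟨m, hmK⟩ : Fin K)) (by simpa using hm)
    by_cases hS : (⟨m, hmK⟩ : Fin K) ∈ S
    · rw [if_pos hS, if_neg (by rw [hmem]; simp [hS])]; ring
    · rw [if_neg hS, if_pos (by rw [hmem]; simp [hS])]; ring

lemma card_refl {τ : ℕ} (S : Finset (Fin K)) (h : τ ≤ K) :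
    i + 2 * (((S ∆ Iset τ).card : ℤ)) - K = 2 * pth i S τ - pth i S K := by
  have h1 := pth_refl_ge i S h (le_refl K)
  rw [pth_K i (S ∆ Iset τ)] at h1
  exact h1

lemma symmDiff_cancel (S : Finset (Fin K)) (τ : ℕ) : (S ∆ Iset τ) ∆ Iset τ = S :=
  symmDiff_symmDiff_cancel_right (Iset τ) S
/-- `S` hits level `c` at some time `≤ K`. -/
def Hits (S : Finset (Fin K)) (c : ℤ) : Prop := ∃ m, m ≤ K ∧ pth i S m = c

/-- first hitting time of level `c` -/
noncomputable def tau (S : Finset (Fin K)) (c : ℤ) : ℕ :=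
  sInf {m | m ≤ K ∧ pth i S m = c}

lemma tau_spec {S : Finset (Fin K)} {c : ℤ} (h : Hits i S c) :
    tau i S c ≤ K ∧ pth i S (tau i S c) = c :=
  Nat.sInf_mem (h : {m | m ≤ K ∧ pth i S m = c}.Nonempty)

lemma tau_le {S : Finset (Fin K)} {c : ℤ} {m : ℕ} (hmK : m ≤ K)
    (hc : pth i S m = c) : tau i S c ≤ m :=
  Nat.sInf_le ⟨hmK, hc⟩

lemma not_hit_of_lt_tau {S : Finset (Fin K)} {c : ℤ} {m : ℕ}
    (hm : m < tau i S c) (hmK : m ≤ K) : pth i S m ≠ c :=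
  fun hc => (Nat.notMem_of_lt_sInf hm) ⟨hmK, hc⟩

lemma tau_congr {S S' : Finset (Fin K)} {c : ℤ}
    (hagree : ∀ m ≤ tau i S c, pth i S' m = pth i S m) (h : Hits i S c) :
    tau i S' c = tau i S c := by
  obtain ⟨h1, h2⟩ := tau_spec i h
  have hle : tau i S' c ≤ tau i S c :=
    tau_le i h1 (by rw [hagree _ (le_refl _)]; exact h2)
  rcases lt_or_eq_of_le hle with hlt | heq
  · exfalso
    have h3 : Hits i S' c := ⟨tau i S c, h1, by rw [hagree _ (le_refl _)]; exact h2⟩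
    obtain ⟨h4, h5⟩ := tau_spec i h3
    rw [hagree _ (le_of_lt hlt)] at h5
    exact not_hit_of_lt_tau i hlt h4 h5
  · exact heq

lemma ivt_up (S : Finset (Fin K)) {m₁ m₂ : ℕ} (c : ℤ) (h12 : m₁ ≤ m₂) (h2K : m₂ ≤ K)
    (h1 : pth i S m₁ ≤ c) (h2 : c ≤ pth i S m₂) :
    ∃ m, m₁ ≤ m ∧ m ≤ m₂ ∧ pth i S m = c := by
  classical
  have hex : ∃ m, m₁ ≤ m ∧ c ≤ pth i S m := ⟨m₂, h12, h2⟩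
  refine ⟨Nat.find hex, (Nat.find_spec hex).1, Nat.find_min' hex ⟨h12, h2⟩, ?_⟩
  obtain ⟨ha, hb⟩ := Nat.find_spec hex
  have hle : Nat.find hex ≤ m₂ := Nat.find_min' hex ⟨h12, h2⟩
  rcases eq_or_lt_of_le ha with heq | hlt
  · rw [← heq] at hb ⊢
    omega
  · have hmin := Nat.find_min hex (m := Nat.find hex - 1) (by omega)
    push_neg at hmin
    have hlt2 : pth i S (Nat.find hex - 1) < c := hmin (by omega)
    have hstep : Nat.find hex - 1 < K := by omega
    have hx := pth_succ i S hstep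
    rw [show Nat.find hex - 1 + 1 = Nat.find hex by omega] at hx
    by_cases hS : (⟨Nat.find hex - 1, hstep⟩ : Fin K) ∈ S <;>
      simp [hS] at hx <;> omega

lemma pth_compl (S : Finset (Fin K)) {m : ℕ} (hm : m ≤ K) :
    pth i (S ∆ Iset 0) m = 2 * i - pth i S m := by
  rw [pth_refl_ge i S (Nat.zero_le m) hm, pth_zero]

lemma ivt_down (S : Finset (Fin K)) {m₁ m₂ : ℕ} (c : ℤ) (h12 : m₁ ≤ m₂) (h2K : m₂ ≤ K)
    (h1 : c ≤ pth i S m₁) (h2 : pth i S m₂ ≤ c) :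
    ∃ m, m₁ ≤ m ∧ m ≤ m₂ ∧ pth i S m = c := by
  obtain ⟨m, hm1, hm2, hm3⟩ := ivt_up i (S ∆ Iset 0) (2 * i - c) h12 h2K
    (by rw [pth_compl i S (le_trans h12 h2K)]; omega)
    (by rw [pth_compl i S h2K]; omega)
  rw [pth_compl i S (le_trans hm2 h2K)] at hm3
  exact ⟨m, hm1, hm2, by omega⟩

lemma not_hits_above {S : Finset (Fin K)} {c : ℤ} (hic : i < c)
    (hnot : ¬ Hits i S c) {m : ℕ} (hm : m ≤ K) : pth i S m < c := by
  by_contra hcon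
  push_neg at hcon
  obtain ⟨m', _, hm2, hm3⟩ := ivt_up i S c (Nat.zero_le m) hm
    (by rw [pth_zero]; omega) hcon
  exact hnot ⟨m', le_trans hm2 hm, hm3⟩

lemma not_hits_below {S : Finset (Fin K)} {c : ℤ} (hic : c < i)
    (hnot : ¬ Hits i S c) {m : ℕ} (hm : m ≤ K) : c < pth i S m := by
  by_contra hcon
  push_neg at hcon
  obtain ⟨m', _, hm2, hm3⟩ := ivt_down i S c (Nat.zero_le m) hm
    (by rw [pth_zero]; omega) hcon
  exact hnot ⟨m', le_trans hm2 hm, hm3⟩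

lemma lt_of_lt_tau {S : Finset (Fin K)} {c : ℤ} (hic : i < c) (h : Hits i S c)
    {m : ℕ} (hm : m < tau i S c) : pth i S m < c := by
  have hτK := (tau_spec i h).1
  have hmK : m ≤ K := by omega
  by_contra hcon
  push_neg at hcon
  obtain ⟨m', _, hm2, hm3⟩ := ivt_up i S c (Nat.zero_le m) hmK
    (by rw [pth_zero]; omega) hcon
  exact not_hit_of_lt_tau i (by omega) (by omega) hm3

lemma gt_of_lt_tau {S : Finset (Fin K)} {c : ℤ} (hic : c < i) (h : Hits i S c)
    {m : ℕ} (hm : m < tau i S c) : c < pth i S m := by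
  have hτK := (tau_spec i h).1
  have hmK : m ≤ K := by omega
  by_contra hcon
  push_neg at hcon
  obtain ⟨m', _, hm2, hm3⟩ := ivt_down i S c (Nat.zero_le m) hmK
    (by rw [pth_zero]; omega) hcon
  exact not_hit_of_lt_tau i (by omega) (by omega) hm3

def Aset (K : ℕ) (n : ℕ) : Finset (Finset (Fin K)) :=
  Finset.univ.filter (fun S => S.card = n)

lemma card_Aset (n : ℕ) : (Aset K n).card = Nat.choose K n := by
  classical
  have h : Aset K n = Finset.powersetCard n (Finset.univ : Finset (Fin K)) := by
    ext S
    simp [Aset, Finset.mem_powersetCard]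
  rw [h, Finset.card_powersetCard, Finset.card_univ, Fintype.card_fin]

lemma hits_refl_tau {S : Finset (Fin K)} {c : ℤ} (h : Hits i S c) :
    Hits i (S ∆ Iset (tau i S c)) c := by
  obtain ⟨h1, h2⟩ := tau_spec i h
  exact ⟨tau i S c, h1, by rw [pth_refl_le i S (le_refl _)]; exact h2⟩

lemma tau_refl_tau {S : Finset (Fin K)} {c : ℤ} (h : Hits i S c) :
    tau i (S ∆ Iset (tau i S c)) c = tau i S c :=
  tau_congr i (fun m hm => pth_refl_le i S hm) h

lemma refl_refl {S : Finset (Fin K)} {c : ℤ} (h : Hits i S c) :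
    (S ∆ Iset (tau i S c)) ∆ Iset (tau i (S ∆ Iset (tau i S c)) c) = S := by
  rw [tau_refl_tau i h, symmDiff_cancel]

lemma card_refl_tau {S : Finset (Fin K)} {c : ℤ} (h : Hits i S c) :
    i + 2 * (((S ∆ Iset (tau i S c)).card : ℤ)) - K
      = 2 * c - (i + 2 * (S.card : ℤ) - K) := by
  obtain ⟨h1, h2⟩ := tau_spec i h
  rw [card_refl i S h1, h2, pth_K]

lemma card_hits_filter (c : ℤ) (n n' : ℕ)
    (hrel : ((i + 2 * n - K) + (i + 2 * n' - K) : ℤ) = 2 * c)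
    (hside : (c < i ∧ ((i + 2 * n' - K : ℤ)) ≤ c) ∨ (i < c ∧ c ≤ ((i + 2 * n' - K : ℤ)))) :
    (((Aset K n).filter (fun S => Hits i S c)).card : ℤ) = ((Aset K n').card : ℤ) := by
  classical
  have hitsT : ∀ T ∈ Aset K n', Hits i T c := by
    intro T hT
    have hcard : T.card = n' := by simpa [Aset] using hT
    have hend : pth i T K = i + 2 * (n' : ℤ) - K := by rw [pth_K, hcard]
    rcases hside with ⟨h1, h2⟩ | ⟨h1, h2⟩
    · obtain ⟨m, _, hm2, hm3⟩ := ivt_down i T c (Nat.zero_le K) (le_refl K)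
        (by rw [pth_zero]; omega) (by omega)
      exact ⟨m, hm2, hm3⟩
    · obtain ⟨m, _, hm2, hm3⟩ := ivt_up i T c (Nat.zero_le K) (le_refl K)
        (by rw [pth_zero]; omega) (by omega)
      exact ⟨m, hm2, hm3⟩
  congr 1
  apply Finset.card_bij' (fun S _ => S ∆ Iset (tau i S c)) (fun T _ => T ∆ Iset (tau i T c))
  · intro S hS
    simp only [Finset.mem_filter] at hS
    obtain ⟨hSA, hSh⟩ := hS
    have hcard : S.card = n := by simpa [Aset] using hSA
    have := card_refl_tau i hSh
    rw [hcard] at this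
    have : ((S ∆ Iset (tau i S c)).card : ℤ) = n' := by omega
    simp only [Aset, Finset.mem_filter, Finset.mem_univ, true_and]
    exact_mod_cast this
  · intro T hT
    have hTh := hitsT T hT
    have hcard : T.card = n' := by simpa [Aset] using hT
    have h2 := card_refl_tau i hTh
    rw [hcard] at h2
    have h3 : ((T ∆ Iset (tau i T c)).card : ℤ) = n := by omega
    simp only [Finset.mem_filter]
    constructor
    · simp only [Aset, Finset.mem_filter, Finset.mem_univ, true_and]
      exact_mod_cast h3
    · exact hits_refl_tau i hTh
  · intro S hS
    simp only [Finset.mem_filter] at hS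
    exact refl_refl i hS.2
  · intro T hT
    exact refl_refl i (hitsT T hT)

noncomputable def dblRefl (c₁ c₂ : ℤ) (S : Finset (Fin K)) : Finset (Fin K) :=
  (S ∆ Iset (tau i S c₁)) ∆ Iset (tau i (S ∆ Iset (tau i S c₁)) c₂)

lemma card_UL (l u : ℤ) (n n' : ℕ)
    (hli : l < i) (hiu : i < u)
    (he : l ≤ i + 2 * n - K)
    (hn' : (n' : ℤ) = n + (u - l))
    (hK2 : (K : ℤ) ≤ 2 * (u - l)) :
    (((Aset K n).filter
        (fun S => Hits i S l ∧ Hits i S u ∧ tau i S u < tau i S l)).card : ℤ)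
      = ((Aset K n').card : ℤ) := by
  classical
  have hlu : l < u := lt_trans hli hiu
  congr 1
  apply Finset.card_bij' (fun S _ => dblRefl i u (2 * u - l) S)
    (fun T _ => dblRefl i (2 * u - l) u T)
  -- forward membership
  · intro S hS
    simp only [Finset.mem_filter] at hS
    obtain ⟨hSA, hHl, hHu, hττ⟩ := hS
    have hcard : S.card = n := by simpa [Aset] using hSA
    obtain ⟨hτlK, hpτl⟩ := tau_spec i hHl
    obtain ⟨hτuK, hpτu⟩ := tau_spec i hHu
    have hH1 : Hits i (S ∆ Iset (tau i S u)) (2 * u - l) := by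
      refine ⟨tau i S l, hτlK, ?_⟩
      rw [pth_refl_ge i S (le_of_lt hττ) hτlK, hpτu, hpτl]
    have hc1 := card_refl_tau i hHu
    have hc2 := card_refl_tau i hH1
    rw [hcard] at hc1
    simp only [Aset, Finset.mem_filter, Finset.mem_univ, true_and, dblRefl]
    have hfin : (((S ∆ Iset (tau i S u)) ∆
        Iset (tau i (S ∆ Iset (tau i S u)) (2 * u - l))).card : ℤ) = n' := by omega
    exact_mod_cast hfin
  -- backward membership
  · intro T hT
    have hcard : T.card = n' := by simpa [Aset] using hT
    have hendT : pth i T K = i + 2 * (n' : ℤ) - K := by rw [pth_K, hcard]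
    have hHσ : Hits i T (2 * u - l) := by
      obtain ⟨m, _, hm2, hm3⟩ := ivt_up i T (2 * u - l) (Nat.zero_le K) (le_refl K)
        (by rw [pth_zero]; omega) (by omega)
      exact ⟨m, hm2, hm3⟩
    obtain ⟨hσK, hpσ⟩ := tau_spec i hHσ
    obtain ⟨m₀, hm₀σ, hm₀⟩ : ∃ m, m ≤ tau i T (2 * u - l) ∧
        pth i (T ∆ Iset (tau i T (2 * u - l))) m = u := by
      obtain ⟨m, _, hm2, hm3⟩ := ivt_up i (T ∆ Iset (tau i T (2 * u - l))) u
        (Nat.zero_le _) hσK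
        (by rw [pth_zero]; omega)
        (by rw [pth_refl_le i T (le_refl _), hpσ]; omega)
      exact ⟨m, hm2, hm3⟩
    have hHu1 : Hits i (T ∆ Iset (tau i T (2 * u - l))) u :=
      ⟨m₀, le_trans hm₀σ hσK, hm₀⟩
    obtain ⟨hτK, hpτ⟩ := tau_spec i hHu1
    have hτσle : tau i (T ∆ Iset (tau i T (2 * u - l))) u ≤ tau i T (2 * u - l) :=
      le_trans (tau_le i (le_trans hm₀σ hσK) hm₀) hm₀σ
    have hτσ : tau i (T ∆ Iset (tau i T (2 * u - l))) u < tau i T (2 * u - l) := by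
      rcases lt_or_eq_of_le hτσle with h | h
      · exact h
      · exfalso
        rw [h, pth_refl_le i T (le_refl _), hpσ] at hpτ
        omega
    have hc1 := card_refl_tau i hHσ
    have hc2 := card_refl_tau i hHu1
    rw [hcard] at hc1
    have hSmem : ((((T ∆ Iset (tau i T (2 * u - l))) ∆
        Iset (tau i (T ∆ Iset (tau i T (2 * u - l))) u)).card : ℤ)) = n := by omega
    have hHSu : Hits i ((T ∆ Iset (tau i T (2 * u - l))) ∆
        Iset (tau i (T ∆ Iset (tau i T (2 * u - l))) u)) u := hits_refl_tau i hHu1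
    have htauSu : tau i ((T ∆ Iset (tau i T (2 * u - l))) ∆
        Iset (tau i (T ∆ Iset (tau i T (2 * u - l))) u)) u
          = tau i (T ∆ Iset (tau i T (2 * u - l))) u := tau_refl_tau i hHu1
    have hpTτ : pth i T (tau i (T ∆ Iset (tau i T (2 * u - l))) u) = u := by
      rw [← pth_refl_le i T (le_of_lt hτσ)]
      exact hpτ
    have hpSσ : pth i ((T ∆ Iset (tau i T (2 * u - l))) ∆
        Iset (tau i (T ∆ Iset (tau i T (2 * u - l))) u)) (tau i T (2 * u - l)) = l := by
      rw [pth_refl_ge i (T ∆ Iset (tau i T (2 * u - l))) (le_of_lt hτσ) hσK, hpτ,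
        pth_refl_le i T (le_refl _), hpσ]
      ring
    have hHSl : Hits i ((T ∆ Iset (tau i T (2 * u - l))) ∆
        Iset (tau i (T ∆ Iset (tau i T (2 * u - l))) u)) l :=
      ⟨tau i T (2 * u - l), hσK, hpSσ⟩
    have hσKz : ((tau i T (2 * u - l) : ℕ) : ℤ) ≤ (K : ℤ) := by exact_mod_cast hσK
    have hkey : ∀ m ≤ tau i (T ∆ Iset (tau i T (2 * u - l))) u,
        pth i ((T ∆ Iset (tau i T (2 * u - l))) ∆
          Iset (tau i (T ∆ Iset (tau i T (2 * u - l))) u)) m ≠ l := by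
      intro m hm hl
      rw [pth_refl_le i (T ∆ Iset (tau i T (2 * u - l))) hm,
        pth_refl_le i T (le_trans hm (le_of_lt hτσ))] at hl
      have hmK : m ≤ K := le_trans (le_trans hm (le_of_lt hτσ)) hσK
      have hd1 := pth_dist i T (Nat.zero_le m) hmK
      have hd2 := pth_dist i T hm (le_trans (le_of_lt hτσ) hσK)
      have hd3 := pth_dist i T (le_of_lt hτσ) hσK
      rw [pth_zero, hl] at hd1
      rw [hl, hpTτ] at hd2
      rw [hpTτ, hpσ] at hd3
      rw [abs_le] at hd1 hd2 hd3
      have h1 := hd1.1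
      have h2 := hd2.2
      have h3 := hd3.2
      omega
    have hττS : tau i ((T ∆ Iset (tau i T (2 * u - l))) ∆
          Iset (tau i (T ∆ Iset (tau i T (2 * u - l))) u)) u
        < tau i ((T ∆ Iset (tau i T (2 * u - l))) ∆
          Iset (tau i (T ∆ Iset (tau i T (2 * u - l))) u)) l := by
      rw [htauSu]
      by_contra hcon
      push_neg at hcon
      exact hkey _ hcon (tau_spec i hHSl).2
    simp only [dblRefl, Finset.mem_filter]
    refine ⟨?_, hHSl, hHSu, hττS⟩
    simp only [Aset, Finset.mem_filter, Finset.mem_univ, true_and]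
    exact_mod_cast hSmem
  -- left inverse
  · intro S hS
    simp only [Finset.mem_filter] at hS
    obtain ⟨_, hHl, hHu, hττ⟩ := hS
    obtain ⟨hτlK, hpτl⟩ := tau_spec i hHl
    obtain ⟨hτuK, hpτu⟩ := tau_spec i hHu
    have hH1 : Hits i (S ∆ Iset (tau i S u)) (2 * u - l) := by
      refine ⟨tau i S l, hτlK, ?_⟩
      rw [pth_refl_ge i S (le_of_lt hττ) hτlK, hpτu, hpτl]
    simp only [dblRefl]
    rw [refl_refl i hH1, tau_congr i (fun m hm => pth_refl_le i S hm) hHu,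
      symmDiff_cancel]
  -- right inverse
  · intro T hT
    have hcard : T.card = n' := by simpa [Aset] using hT
    have hendT : pth i T K = i + 2 * (n' : ℤ) - K := by rw [pth_K, hcard]
    have hHσ : Hits i T (2 * u - l) := by
      obtain ⟨m, _, hm2, hm3⟩ := ivt_up i T (2 * u - l) (Nat.zero_le K) (le_refl K)
        (by rw [pth_zero]; omega) (by omega)
      exact ⟨m, hm2, hm3⟩
    obtain ⟨hσK, hpσ⟩ := tau_spec i hHσ
    have hHu1 : Hits i (T ∆ Iset (tau i T (2 * u - l))) u := by
      obtain ⟨m, _, hm2, hm3⟩ := ivt_up i (T ∆ Iset (tau i T (2 * u - l))) u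
        (Nat.zero_le _) hσK
        (by rw [pth_zero]; omega)
        (by rw [pth_refl_le i T (le_refl _), hpσ]; omega)
      exact ⟨m, le_trans hm2 hσK, hm3⟩
    simp only [dblRefl]
    rw [refl_refl i hHu1, tau_congr i (fun m hm => pth_refl_le i T hm) hHσ,
      symmDiff_cancel]

lemma hits_compl {S : Finset (Fin K)} {c : ℤ} (h : Hits i S c) :
    Hits i (S ∆ Iset 0) (2 * i - c) := by
  obtain ⟨m, hm, hc⟩ := h
  exact ⟨m, hm, by rw [pth_compl i S hm, hc]⟩

lemma tau_compl (S : Finset (Fin K)) (c : ℤ) :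
    tau i (S ∆ Iset 0) (2 * i - c) = tau i S c := by
  unfold tau
  congr 1
  ext m
  simp only [Set.mem_setOf_eq]
  constructor
  · rintro ⟨h1, h2⟩
    rw [pth_compl i S h1] at h2
    exact ⟨h1, by omega⟩
  · rintro ⟨h1, h2⟩
    exact ⟨h1, by rw [pth_compl i S h1, h2]⟩

lemma tau_compl' (S : Finset (Fin K)) (c : ℤ) :
    tau i (S ∆ Iset 0) c = tau i S (2 * i - c) := by
  have h := tau_compl i S (2 * i - c)
  rw [show 2 * i - (2 * i - c) = c from by ring] at h
  exact h

lemma card_le_K (S : Finset (Fin K)) : S.card ≤ K := by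
  have := Finset.card_le_univ S
  simpa using this

lemma card_compl (S : Finset (Fin K)) : ((S ∆ Iset 0).card : ℤ) = K - S.card := by
  have h := card_refl 0 S (Nat.zero_le K)
  rw [pth_zero, pth_K] at h
  have := card_le_K (S := S)
  omega

lemma card_LU (l u : ℤ) (n n'' : ℕ)
    (hli : l < i) (hiu : i < u)
    (hnK : n ≤ K)
    (he : i + 2 * n - K ≤ u)
    (hn'' : (n'' : ℤ) = (K : ℤ) - n + (u - l))
    (hK2 : (K : ℤ) ≤ 2 * (u - l)) :
    (((Aset K n).filter
        (fun S => Hits i S l ∧ Hits i S u ∧ tau i S l < tau i S u)).card : ℤ)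
      = ((Aset K n'').card : ℤ) := by
  classical
  have hstep : (((Aset K n).filter
      (fun S => Hits i S l ∧ Hits i S u ∧ tau i S l < tau i S u)).card : ℤ)
      = (((Aset K (K - n)).filter
        (fun S => Hits i S (2 * i - u) ∧ Hits i S (2 * i - l) ∧
          tau i S (2 * i - l) < tau i S (2 * i - u))).card : ℤ) := by
    congr 1
    apply Finset.card_bij' (fun S _ => S ∆ Iset 0) (fun T _ => T ∆ Iset 0)
    · intro S hS
      simp only [Finset.mem_filter] at hS ⊢
      obtain ⟨hSA, hHl, hHu, hττ⟩ := hS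
      have hcard : S.card = n := by simpa [Aset] using hSA
      refine ⟨?_, hits_compl i hHu, hits_compl i hHl, ?_⟩
      · simp only [Aset, Finset.mem_filter, Finset.mem_univ, true_and]
        have h2 := card_compl (S := S)
        rw [hcard] at h2
        omega
      · rw [tau_compl i S l, tau_compl i S u]
        exact hττ
    · intro T hT
      simp only [Finset.mem_filter] at hT ⊢
      obtain ⟨hTA, hHu', hHl', hττ⟩ := hT
      have hcard : T.card = K - n := by simpa [Aset] using hTA
      have hu2 : (2 * i - (2 * i - u)) = u := by ring
      have hl2 : (2 * i - (2 * i - l)) = l := by ring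
      have hHu2 : Hits i (T ∆ Iset 0) u := by
        have := hits_compl i hHu'
        rwa [hu2] at this
      have hHl2 : Hits i (T ∆ Iset 0) l := by
        have := hits_compl i hHl'
        rwa [hl2] at this
      refine ⟨?_, hHl2, hHu2, ?_⟩
      · simp only [Aset, Finset.mem_filter, Finset.mem_univ, true_and]
        have h2 := card_compl (S := T)
        rw [hcard] at h2
        have : ((K - n : ℕ) : ℤ) = (K : ℤ) - n := by omega
        omega
      · have e1 : tau i (T ∆ Iset 0) l = tau i T (2 * i - l) := tau_compl' i T l
        have e2 : tau i (T ∆ Iset 0) u = tau i T (2 * i - u) := tau_compl' i T u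
        rw [e1, e2]
        exact hττ
    · intro S _
      exact symmDiff_cancel S 0
    · intro T _
      exact symmDiff_cancel T 0
  rw [hstep]
  apply card_UL i (2 * i - u) (2 * i - l) (K - n) n''
  · omega
  · omega
  · have : ((K - n : ℕ) : ℤ) = (K : ℤ) - n := by omega
    omega
  · have : ((K - n : ℕ) : ℤ) = (K : ℤ) - n := by omega
    omega
  · omega

lemma mem_iff_pth (S : Finset (Fin K)) (k : Fin K) :
    k ∈ S ↔ pth i S ((k : ℕ) + 1) = pth i S (k : ℕ) + 1 := by
  have h := pth_succ i S k.isLt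
  rw [Fin.eta] at h
  constructor
  · intro hm
    rw [h, if_pos hm]
  · intro he
    by_contra hm
    rw [h, if_neg hm] at he
    omega

end BridgeAux

open scoped symmDiff Classical in
lemma BridgeAux.bridges_eq_image (i j l u : ℤ) (B D : ℕ)
    (hj : j = i + B - D) (hli : l < i) (hiu : i < u) :
    BoundedBridges i j l u B D
      = (fun S : Finset (Fin (B + D)) => fun k : Fin (B + D + 1) => BridgeAux.pth i S (k : ℕ)) ''
        ↑((BridgeAux.Aset (B + D) B).filter
          (fun S => ¬(BridgeAux.Hits i S l ∨ BridgeAux.Hits i S u))) := by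
  classical
  ext ω
  constructor
  · rintro ⟨⟨h0, hlast, hsteps, hcount⟩, hbounds⟩
    refine ⟨Finset.univ.filter (fun k : Fin (B + D) => ω k.succ = ω k.castSucc + 1),
      ?_, ?_⟩
    · have hval : ∀ m (hm : m ≤ B + D),
          BridgeAux.pth i (Finset.univ.filter
            (fun k : Fin (B + D) => ω k.succ = ω k.castSucc + 1)) m
            = ω ⟨m, Nat.lt_succ_of_le hm⟩ := by
        intro m
        induction m with
        | zero =>
          intro _
          rw [BridgeAux.pth_zero]
          have : (⟨0, Nat.lt_succ_of_le (Nat.zero_le _)⟩ : Fin (B + D + 1)) = 0 := by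
            ext; simp
          rw [this, h0]
        | succ m ih =>
          intro hm
          have hmK : m < B + D := hm
          have hstep := BridgeAux.pth_succ i (Finset.univ.filter
            (fun k : Fin (B + D) => ω k.succ = ω k.castSucc + 1)) hmK
          have hsucc : (⟨m, hmK⟩ : Fin (B + D)).succ
              = (⟨m + 1, Nat.lt_succ_of_le hm⟩ : Fin (B + D + 1)) := by
            ext; simp
          have hcast : (⟨m, hmK⟩ : Fin (B + D)).castSucc
              = (⟨m, Nat.lt_succ_of_le (le_of_lt hmK)⟩ : Fin (B + D + 1)) := by
            ext; simp
          rw [hstep, ih (le_of_lt hmK)]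
          by_cases hmem : (⟨m, hmK⟩ : Fin (B + D)) ∈ Finset.univ.filter
            (fun k : Fin (B + D) => ω k.succ = ω k.castSucc + 1)
          · rw [if_pos hmem]
            simp only [Finset.mem_filter, Finset.mem_univ, true_and, hsucc, hcast] at hmem
            rw [← hmem]
          · rw [if_neg hmem]
            simp only [Finset.mem_filter, Finset.mem_univ, true_and, hsucc, hcast] at hmem
            have habs := hsteps ⟨m, hmK⟩
            rw [hsucc, hcast] at habs
            rcases (abs_eq (by norm_num : (0:ℤ) ≤ 1)).mp habs with h1 | h1
            · exact absurd (by omega) hmem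
            · have : ω ⟨m, Nat.lt_succ_of_le (le_of_lt hmK)⟩ + -1
                  = ω ⟨m + 1, Nat.lt_succ_of_le hm⟩ := by omega
              rw [← this]
      simp only [Finset.coe_filter, Set.mem_setOf_eq, Finset.mem_coe, Finset.mem_filter]
      constructor
      · simp only [BridgeAux.Aset, Finset.mem_filter, Finset.mem_univ, true_and]
        exact hcount
      · rintro (⟨m, hmK, hp⟩ | ⟨m, hmK, hp⟩)
        · rw [hval m hmK] at hp
          have := (hbounds ⟨m, Nat.lt_succ_of_le hmK⟩).1
          omega
        · rw [hval m hmK] at hp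
          have := (hbounds ⟨m, Nat.lt_succ_of_le hmK⟩).2
          omega
    · -- ω equals the path of its up-step set
      have hval : ∀ m (hm : m ≤ B + D),
          BridgeAux.pth i (Finset.univ.filter
            (fun k : Fin (B + D) => ω k.succ = ω k.castSucc + 1)) m
            = ω ⟨m, Nat.lt_succ_of_le hm⟩ := by
        intro m
        induction m with
        | zero =>
          intro _
          rw [BridgeAux.pth_zero]
          have : (⟨0, Nat.lt_succ_of_le (Nat.zero_le _)⟩ : Fin (B + D + 1)) = 0 := by
            ext; simp
          rw [this, h0]
        | succ m ih =>
          intro hm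
          have hmK : m < B + D := hm
          have hstep := BridgeAux.pth_succ i (Finset.univ.filter
            (fun k : Fin (B + D) => ω k.succ = ω k.castSucc + 1)) hmK
          have hsucc : (⟨m, hmK⟩ : Fin (B + D)).succ
              = (⟨m + 1, Nat.lt_succ_of_le hm⟩ : Fin (B + D + 1)) := by
            ext; simp
          have hcast : (⟨m, hmK⟩ : Fin (B + D)).castSucc
              = (⟨m, Nat.lt_succ_of_le (le_of_lt hmK)⟩ : Fin (B + D + 1)) := by
            ext; simp
          rw [hstep, ih (le_of_lt hmK)]
          by_cases hmem : (⟨m, hmK⟩ : Fin (B + D)) ∈ Finset.univ.filter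
            (fun k : Fin (B + D) => ω k.succ = ω k.castSucc + 1)
          · rw [if_pos hmem]
            simp only [Finset.mem_filter, Finset.mem_univ, true_and, hsucc, hcast] at hmem
            rw [← hmem]
          · rw [if_neg hmem]
            simp only [Finset.mem_filter, Finset.mem_univ, true_and, hsucc, hcast] at hmem
            have habs := hsteps ⟨m, hmK⟩
            rw [hsucc, hcast] at habs
            rcases (abs_eq (by norm_num : (0:ℤ) ≤ 1)).mp habs with h1 | h1
            · exact absurd (by omega) hmem
            · have : ω ⟨m, Nat.lt_succ_of_le (le_of_lt hmK)⟩ + -1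
                  = ω ⟨m + 1, Nat.lt_succ_of_le hm⟩ := by omega
              rw [← this]
      funext k
      show BridgeAux.pth i _ ((k : ℕ)) = ω k
      rw [hval (k : ℕ) (Nat.lt_succ_iff.mp k.isLt)]
  · rintro ⟨S, hS, rfl⟩
    simp only [Finset.coe_filter, Set.mem_setOf_eq] at hS
    obtain ⟨hSA, hnot⟩ := hS
    have hcard : S.card = B := by simpa [BridgeAux.Aset] using hSA
    push_neg at hnot
    obtain ⟨hnl, hnu⟩ := hnot
    refine ⟨⟨?_, ?_, ?_, ?_⟩, ?_⟩
    · show BridgeAux.pth i S ((0 : Fin (B + D + 1)) : ℕ) = i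
      simp [BridgeAux.pth_zero]
    · show BridgeAux.pth i S ((Fin.last (B + D) : Fin (B + D + 1)) : ℕ) = j
      rw [Fin.val_last, BridgeAux.pth_K, hcard]
      omega
    · intro k
      show |BridgeAux.pth i S ((k.succ : Fin (B + D + 1)) : ℕ)
        - BridgeAux.pth i S ((k.castSucc : Fin (B + D + 1)) : ℕ)| = 1
      rw [Fin.val_succ, Fin.coe_castSucc]
      exact BridgeAux.pth_step_abs i S k.isLt
    · have hfe : (Finset.univ.filter (fun k : Fin (B + D) =>
          BridgeAux.pth i S ((k.succ : Fin (B + D + 1)) : ℕ)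
            = BridgeAux.pth i S ((k.castSucc : Fin (B + D + 1)) : ℕ) + 1)) = S := by
        ext k
        simp only [Finset.mem_filter, Finset.mem_univ, true_and, Fin.val_succ,
          Fin.coe_castSucc]
        exact (BridgeAux.mem_iff_pth i S k).symm
      rw [hfe]
      exact hcard
    · intro k
      have hk : (k : ℕ) ≤ B + D := Nat.lt_succ_iff.mp k.isLt
      exact ⟨BridgeAux.not_hits_below i hli hnl hk, BridgeAux.not_hits_above i hiu hnu hk⟩

lemma BridgeAux.pth_injective (i : ℤ) (K : ℕ) :
    Function.Injective
      (fun S : Finset (Fin K) => fun k : Fin (K + 1) => BridgeAux.pth i S (k : ℕ)) := by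
  intro S T h
  ext k
  rw [BridgeAux.mem_iff_pth i S k, BridgeAux.mem_iff_pth i T k]
  have h1 : BridgeAux.pth i S ((k : ℕ) + 1) = BridgeAux.pth i T ((k : ℕ) + 1) :=
    congrFun h (⟨(k : ℕ) + 1, Nat.succ_lt_succ k.isLt⟩ : Fin (K + 1))
  have h2 : BridgeAux.pth i S (k : ℕ) = BridgeAux.pth i T (k : ℕ) :=
    congrFun h (⟨(k : ℕ), Nat.lt_succ_of_lt k.isLt⟩ : Fin (K + 1))
  rw [h1, h2]


/-- Theorem 1, case 4 (exact form): with `l < i < u`, `l < j < u`, both bounds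
reachable (`u ≤ i + B`, `l ≥ i - D`) and `K ≤ 2(u - l)`, as an identity of
integers, `card 𝕊_{ij}^B(l,u) = C(K,B) - C(K,B_l) - C(K,B_u) + c_{lu} + c_{ul}`
where `B_l = B + l - j`, `B_u = B - j + u`, `c_{lu} = C(K, B - (u - l))` if
`B ≥ u - l` (else `0`), and `c_{ul} = C(K, B + (u - l))`. -/
theorem bounded_bridge_count_case4 (i j l u : ℤ) (B D : ℕ)
    (hj : j = i + B - D) (hli : l < i) (hiu : i < u) (hlj : l < j) (hju : j < u)
    (hur : u ≤ i + B) (hlr : i - D ≤ l) (hK : ((B + D : ℕ) : ℤ) ≤ 2 * (u - l)) :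
    ((BoundedBridges i j l u B D).ncard : ℤ)
      = (Nat.choose (B + D) B : ℤ)
        - (Nat.choose (B + D) (((B : ℤ) + l - j).toNat) : ℤ)
        - (Nat.choose (B + D) (((B : ℤ) - j + u).toNat) : ℤ)
        + (if u - l ≤ (B : ℤ) then
            (Nat.choose (B + D) (B - (u - l).toNat) : ℤ) else 0)
        + (Nat.choose (B + D) (B + (u - l).toNat) : ℤ) := by
  classical
  open BridgeAux in
  have hncard : ((BoundedBridges i j l u B D).ncard : ℤ)
      = (((Aset (B + D) B).filter
          (fun S => ¬(Hits i S l ∨ Hits i S u))).card : ℤ) := by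
    rw [BridgeAux.bridges_eq_image i j l u B D hj hli hiu,
      Set.ncard_image_of_injective _ (BridgeAux.pth_injective i (B + D)),
      Set.ncard_coe_finset]
  rw [hncard]
  open BridgeAux in
  -- toNat facts
  have htl : (((u - l).toNat : ℕ) : ℤ) = u - l := Int.toNat_of_nonneg (by omega)
  have hnl : ((((B : ℤ) + l - j).toNat : ℕ) : ℤ) = (B : ℤ) + l - j :=
    Int.toNat_of_nonneg (by omega)
  have hnu : ((((B : ℤ) - j + u).toNat : ℕ) : ℤ) = (B : ℤ) - j + u :=
    Int.toNat_of_nonneg (by omega)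
  -- counts
  have hA : ((Aset (B + D) B).card : ℤ) = (Nat.choose (B + D) B : ℤ) := by
    rw [card_Aset]
  have hL : (((Aset (B + D) B).filter (fun S => Hits i S l)).card : ℤ)
      = (Nat.choose (B + D) (((B : ℤ) + l - j).toNat) : ℤ) := by
    rw [card_hits_filter i l B (((B : ℤ) + l - j).toNat) (by push_cast; omega)
      (Or.inl ⟨hli, by push_cast; omega⟩), card_Aset]
  have hU : (((Aset (B + D) B).filter (fun S => Hits i S u)).card : ℤ)
      = (Nat.choose (B + D) (((B : ℤ) - j + u).toNat) : ℤ) := by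
    rw [card_hits_filter i u B (((B : ℤ) - j + u).toNat) (by push_cast; omega)
      (Or.inr ⟨hiu, by push_cast; omega⟩), card_Aset]
  have hUL : (((Aset (B + D) B).filter
      (fun S => Hits i S l ∧ Hits i S u ∧ tau i S u < tau i S l)).card : ℤ)
      = (Nat.choose (B + D) (B + (u - l).toNat) : ℤ) := by
    rw [card_UL i l u B (B + (u - l).toNat) hli hiu (by push_cast; omega)
      (by push_cast; omega) (by push_cast at hK ⊢; omega), card_Aset]
  have hLU : (((Aset (B + D) B).filter
      (fun S => Hits i S l ∧ Hits i S u ∧ tau i S l < tau i S u)).card : ℤ)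
      = (Nat.choose (B + D) (D + (u - l).toNat) : ℤ) := by
    rw [card_LU i l u B (D + (u - l).toNat) hli hiu (by omega)
      (by push_cast; omega) (by push_cast; omega) (by push_cast at hK ⊢; omega),
      card_Aset]
  -- the ite equals choose (B+D) (D + t)
  have hite : (if u - l ≤ (B : ℤ) then
      (Nat.choose (B + D) (B - (u - l).toNat) : ℤ) else 0)
      = (Nat.choose (B + D) (D + (u - l).toNat) : ℤ) := by
    by_cases h : u - l ≤ (B : ℤ)
    · rw [if_pos h]
      have htB : (u - l).toNat ≤ B := by omega
      have heq : D + (u - l).toNat = (B + D) - (B - (u - l).toNat) := by omega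
      rw [heq, Nat.choose_symm (by omega)]
    · rw [if_neg h]
      have : B + D < D + (u - l).toNat := by omega
      rw [Nat.choose_eq_zero_of_lt this]
      norm_num
  -- partition identities
  have hsplit1 : ((Aset (B + D) B).filter (fun S => Hits i S l ∨ Hits i S u)).card
      + ((Aset (B + D) B).filter (fun S => ¬(Hits i S l ∨ Hits i S u))).card
      = (Aset (B + D) B).card :=
    Finset.card_filter_add_card_filter_not _
  have hsplit2 : ((Aset (B + D) B).filter (fun S => Hits i S l ∨ Hits i S u)).card
      + ((Aset (B + D) B).filter (fun S => Hits i S l ∧ Hits i S u)).card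
      = ((Aset (B + D) B).filter (fun S => Hits i S l)).card
      + ((Aset (B + D) B).filter (fun S => Hits i S u)).card := by
    rw [Finset.filter_or, Finset.filter_and]
    exact Finset.card_union_add_card_inter _ _
  have hsplit3 : ((Aset (B + D) B).filter (fun S => Hits i S l ∧ Hits i S u)).card
      = ((Aset (B + D) B).filter
          (fun S => Hits i S l ∧ Hits i S u ∧ tau i S l < tau i S u)).card
      + ((Aset (B + D) B).filter
          (fun S => Hits i S l ∧ Hits i S u ∧ tau i S u < tau i S l)).card := by
    have hEq : (Aset (B + D) B).filter (fun S => Hits i S l ∧ Hits i S u)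
        = (Aset (B + D) B).filter
            (fun S => (Hits i S l ∧ Hits i S u ∧ tau i S l < tau i S u)
              ∨ (Hits i S l ∧ Hits i S u ∧ tau i S u < tau i S l)) := by
      apply Finset.filter_congr
      intro S _
      constructor
      · rintro ⟨h1, h2⟩
        have hne : tau i S l ≠ tau i S u := by
          intro he
          have e1 := (tau_spec i h1).2
          have e2 := (tau_spec i h2).2
          rw [he, e2] at e1
          omega
        rcases lt_or_gt_of_ne hne with h | h
        · exact Or.inl ⟨h1, h2, h⟩
        · exact Or.inr ⟨h1, h2, h⟩
      · rintro (⟨h1, h2, _⟩ | ⟨h1, h2, _⟩) <;> exact ⟨h1, h2⟩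
    rw [hEq, Finset.filter_or, Finset.card_union_of_disjoint]
    rw [Finset.disjoint_left]
    intro S hS1 hS2
    simp only [Finset.mem_filter] at hS1 hS2
    omega
  -- assemble
  rw [hite]
  have z1 : (((Aset (B + D) B).filter (fun S => Hits i S l ∨ Hits i S u)).card : ℤ)
      + (((Aset (B + D) B).filter (fun S => ¬(Hits i S l ∨ Hits i S u))).card : ℤ)
      = ((Aset (B + D) B).card : ℤ) := by exact_mod_cast hsplit1
  have z2 : (((Aset (B + D) B).filter (fun S => Hits i S l ∨ Hits i S u)).card : ℤ)
      + (((Aset (B + D) B).filter (fun S => Hits i S l ∧ Hits i S u)).card : ℤ)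
      = (((Aset (B + D) B).filter (fun S => Hits i S l)).card : ℤ)
      + (((Aset (B + D) B).filter (fun S => Hits i S u)).card : ℤ) := by
    exact_mod_cast hsplit2
  have z3 : (((Aset (B + D) B).filter (fun S => Hits i S l ∧ Hits i S u)).card : ℤ)
      = (((Aset (B + D) B).filter
          (fun S => Hits i S l ∧ Hits i S u ∧ tau i S l < tau i S u)).card : ℤ)
      + (((Aset (B + D) B).filter
          (fun S => Hits i S l ∧ Hits i S u ∧ tau i S u < tau i S l)).card : ℤ) := by
    exact_mod_cast hsplit3
  rw [hL, hU, hLU, hUL, hA] at *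
  linarith [z1, z2, z3]
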